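/- Let A be a nonempty convex subset of a real vector space E, let f : A → ℝ have a linear derivative Df : A × E → ℝ, and let a ∈ A and u, v ∈ E be such that a + r u + s v ∈ A for all r, s ∈ [0,1]. Suppose that the map c ↦ Df(c; u) admits a linear derivative D²f(·; u, ·) : A × E → ℝ, that (r, s) ↦ D²f(a + r u + s v; u, v) is jointly continuous on [0,1]², and that for each s ∈ [0,1] the map r ↦ Df(a + r u + s v; u) is continuous on [0,1]. Then f(a + u + v) − f(a + u) − f(a + v) + f(a) = ∫₀¹ ∫₀¹ D²f(a + r u + s v; u, v) ds dr. -/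

import Mathlib

open Filter

section Helpers

private lemma tendsto_shift_right' (x : ℝ) :
    Tendsto (fun y : ℝ => y - x) (nhdsWithin x (Set.Ioi x)) (nhdsWithin 0 (Set.Ioi 0)) := by
  apply tendsto_nhdsWithin_of_tendsto_nhds_of_eventually_within
  · have : Tendsto (fun y : ℝ => y - x) (nhds x) (nhds (x - x)) :=
      (continuous_id.sub continuous_const).tendsto x
    simpa using this.mono_left nhdsWithin_le_nhds
  · filter_upwards [self_mem_nhdsWithin] with y hy
    simpa using sub_pos.2 (Set.mem_Ioi.1 hy)

private lemma tendsto_shift_left' (x : ℝ) :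
    Tendsto (fun y : ℝ => x - y) (nhdsWithin x (Set.Iio x)) (nhdsWithin 0 (Set.Ioi 0)) := by
  apply tendsto_nhdsWithin_of_tendsto_nhds_of_eventually_within
  · have : Tendsto (fun y : ℝ => x - y) (nhds x) (nhds (x - x)) :=
      (continuous_const.sub continuous_id).tendsto x
    simpa using this.mono_left nhdsWithin_le_nhds
  · filter_upwards [self_mem_nhdsWithin] with y hy
    simpa using sub_pos.2 (Set.mem_Iio.1 hy)

/-- FTC with one-sided slope limits. -/
private lemma ftc_one_sided' (g h : ℝ → ℝ)
    (hr : ∀ t ∈ Set.Ico (0:ℝ) 1, Tendsto (fun δ : ℝ => (g (t + δ) - g t) / δ)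
      (nhdsWithin 0 (Set.Ioi 0)) (nhds (h t)))
    (hl : ∀ t ∈ Set.Ioc (0:ℝ) 1, Tendsto (fun δ : ℝ => (g (t - δ) - g t) / δ)
      (nhdsWithin 0 (Set.Ioi 0)) (nhds (-(h t))))
    (hc : ContinuousOn h (Set.Icc 0 1)) :
    g 1 - g 0 = ∫ t in (0:ℝ)..1, h t := by
  have hgr : ∀ t ∈ Set.Ico (0:ℝ) 1, Tendsto g (nhdsWithin t (Set.Ioi t)) (nhds (g t)) := by
    intro t ht
    have h1 : Tendsto (fun δ : ℝ => g (t + δ) - g t) (nhdsWithin 0 (Set.Ioi 0)) (nhds 0) := by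
      have := ((hr t ht).mul (tendsto_id.mono_left nhdsWithin_le_nhds))
      simp only [mul_zero] at this
      apply this.congr'
      filter_upwards [self_mem_nhdsWithin] with δ (hδ : (0:ℝ) < δ)
      field_simp
      simp only [id_eq]; ring
    have h2 : Tendsto (fun δ : ℝ => g (t + δ)) (nhdsWithin 0 (Set.Ioi 0)) (nhds (g t)) := by
      have := h1.add_const (g t); simpa using this
    have := h2.comp (tendsto_shift_right' t)
    apply this.congr
    intro y; simp
  have hgl : ∀ t ∈ Set.Ioc (0:ℝ) 1, Tendsto g (nhdsWithin t (Set.Iio t)) (nhds (g t)) := by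
    intro t ht
    have h1 : Tendsto (fun δ : ℝ => g (t - δ) - g t) (nhdsWithin 0 (Set.Ioi 0)) (nhds 0) := by
      have := ((hl t ht).mul (tendsto_id.mono_left nhdsWithin_le_nhds))
      simp only [mul_zero] at this
      apply this.congr'
      filter_upwards [self_mem_nhdsWithin] with δ (hδ : (0:ℝ) < δ)
      field_simp
      simp only [id_eq]; ring
    have h2 : Tendsto (fun δ : ℝ => g (t - δ)) (nhdsWithin 0 (Set.Ioi 0)) (nhds (g t)) := by
      have := h1.add_const (g t); simpa using this
    have := h2.comp (tendsto_shift_left' t)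
    apply this.congr
    intro y; simp
  have hgc : ContinuousOn g (Set.Icc 0 1) := by
    intro t ht
    have hIci : t < 1 → ContinuousWithinAt g (Set.Ici t) t := by
      intro h1
      have : ContinuousWithinAt g (Set.Ioi t) t := hgr t ⟨ht.1, h1⟩
      rw [← continuousWithinAt_Ioi_iff_Ici] at *
      exact this
    have hIic : 0 < t → ContinuousWithinAt g (Set.Iic t) t := by
      intro h0
      have : ContinuousWithinAt g (Set.Iio t) t := hgl t ⟨h0, ht.2⟩
      rw [← continuousWithinAt_Iio_iff_Iic] at *
      exact this
    rcases eq_or_lt_of_le ht.1 with h0 | h0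
    · exact ((hIci (by rw [← h0]; norm_num)).mono (by rw [← h0]; exact Set.Icc_subset_Ici_self))
    rcases eq_or_lt_of_le ht.2 with h1 | h1
    · exact ((hIic h0).mono (by rw [h1]; exact Set.Icc_subset_Iic_self))
    · exact ((hIic h0).union (hIci h1)).mono (fun y hy => le_total y t)
  have hd : ∀ x ∈ Set.Ioo (0:ℝ) 1, HasDerivWithinAt g (h x) (Set.Ioi x) x := by
    intro x hx
    rw [hasDerivWithinAt_iff_tendsto_slope' (Set.notMem_Ioi_self)]
    have := (hr x ⟨hx.1.le, hx.2⟩).comp (tendsto_shift_right' x)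
    apply this.congr
    intro y
    simp [slope_def_field]
  have hint : IntervalIntegrable h MeasureTheory.volume 0 1 := by
    have hc' := hc
    rw [← Set.uIcc_of_le (by norm_num : (0:ℝ) ≤ 1)] at hc'
    exact hc'.intervalIntegrable
  exact (intervalIntegral.integral_eq_sub_of_hasDeriv_right_of_le (by norm_num) hgc hd hint).symm

/-- Rescaling a one-sided slope limit. -/
private lemma slope_rescale' (q : ℝ → ℝ) (μ L : ℝ) (hμ : 0 < μ)
    (h : Tendsto (fun ε : ℝ => q (ε * μ) / ε) (nhdsWithin 0 (Set.Ioi 0)) (nhds (μ * L))) :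
    Tendsto (fun δ : ℝ => q δ / δ) (nhdsWithin 0 (Set.Ioi 0)) (nhds L) := by
  have hm : Tendsto (fun δ : ℝ => δ / μ) (nhdsWithin (0:ℝ) (Set.Ioi 0))
      (nhdsWithin 0 (Set.Ioi 0)) := by
    apply tendsto_nhdsWithin_of_tendsto_nhds_of_eventually_within
    · have : Tendsto (fun δ : ℝ => δ / μ) (nhdsWithin (0:ℝ) (Set.Ioi 0)) (nhds ((0:ℝ) / μ)) :=
        (tendsto_id.div_const μ).mono_left nhdsWithin_le_nhds
      simpa using this
    · filter_upwards [self_mem_nhdsWithin] with δ (hδ : (0:ℝ) < δ)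
      exact div_pos hδ hμ
  have h2 := h.comp hm
  have h3 : Tendsto (fun δ : ℝ => μ * (q δ / δ)) (nhdsWithin 0 (Set.Ioi 0)) (nhds (μ * L)) := by
    apply h2.congr'
    filter_upwards [self_mem_nhdsWithin] with δ (hδ : (0:ℝ) < δ)
    simp only [Function.comp]
    rw [div_mul_cancel₀ _ hμ.ne']
    rw [div_div_eq_mul_div, mul_comm (q δ) μ, mul_div_assoc]
  have h4 := h3.const_mul μ⁻¹
  rw [← mul_assoc, inv_mul_cancel₀ hμ.ne', one_mul] at h4
  apply h4.congr
  intro δ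
  rw [← mul_assoc, inv_mul_cancel₀ hμ.ne', one_mul]

private lemma deriv_along' {E : Type*} [AddCommGroup E] [Module ℝ E]
    (F : E → ℝ) (c w : E) (μ L : ℝ) (hμ : 0 < μ)
    (h : Tendsto (fun ε : ℝ => (F (c + ε • (μ • w)) - F c) / ε)
      (nhdsWithin 0 (Set.Ioi 0)) (nhds (μ * L))) :
    Tendsto (fun δ : ℝ => (F (c + δ • w) - F c) / δ) (nhdsWithin 0 (Set.Ioi 0)) (nhds L) := by
  apply slope_rescale' (fun δ => F (c + δ • w) - F c) μ L hμ
  apply h.congr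
  intro ε
  rw [smul_smul]

end Helpers

theorem secondOrder_linearDerivative_rect_eq_double_integral
    {E : Type*} [AddCommGroup E] [Module ℝ E]
    (A : Set E) (hA : Convex ℝ A) (hAne : A.Nonempty)
    (f : E → ℝ) (Df : E → E → ℝ)
    (hlin : ∀ c ∈ A, IsLinearMap ℝ (Df c))
    (hderiv : ∀ c ∈ A, ∀ c' ∈ A,
      Tendsto (fun ε : ℝ => (f (c + ε • (c' - c)) - f c) / ε) (nhdsWithin 0 (Set.Ioi 0))
        (nhds (Df c (c' - c))))
    (a : E) (ha : a ∈ A) (u v : E)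
    (hrect : ∀ r ∈ Set.Icc (0:ℝ) 1, ∀ s ∈ Set.Icc (0:ℝ) 1, a + r • u + s • v ∈ A)
    (D2f : E → E → ℝ)
    (hlin2 : ∀ c ∈ A, IsLinearMap ℝ (D2f c))
    (hderiv2 : ∀ c ∈ A, ∀ c' ∈ A,
      Tendsto (fun ε : ℝ => (Df (c + ε • (c' - c)) u - Df c u) / ε) (nhdsWithin 0 (Set.Ioi 0))
        (nhds (D2f c (c' - c))))
    (hcont2 : ContinuousOn (fun p : ℝ × ℝ => D2f (a + p.1 • u + p.2 • v) v)
      (Set.Icc 0 1 ×ˢ Set.Icc 0 1))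
    (hcont1 : ∀ s ∈ Set.Icc (0:ℝ) 1,
      ContinuousOn (fun r : ℝ => Df (a + r • u + s • v) u) (Set.Icc 0 1)) :
    f (a + u + v) - f (a + u) - f (a + v) + f a
      = ∫ r in (0:ℝ)..1, ∫ s in (0:ℝ)..1, D2f (a + r • u + s • v) v := by
  -- Step 1: FTC in the `u` direction, for each fixed `s`.
  have Eq1 : ∀ s ∈ Set.Icc (0:ℝ) 1,
      f (a + u + s • v) - f (a + s • v) = ∫ t in (0:ℝ)..1, Df (a + t • u + s • v) u := by
    intro s hs
    have hr : ∀ t ∈ Set.Ico (0:ℝ) 1,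
        Tendsto (fun δ : ℝ => (f (a + (t + δ) • u + s • v) - f (a + t • u + s • v)) / δ)
          (nhdsWithin 0 (Set.Ioi 0)) (nhds (Df (a + t • u + s • v) u)) := by
      intro t ht
      have hmem : a + t • u + s • v ∈ A := hrect t ⟨ht.1, ht.2.le⟩ s hs
      have hmem1 : a + (1:ℝ) • u + s • v ∈ A := hrect 1 ⟨zero_le_one, le_refl 1⟩ s hs
      have key := hderiv _ hmem _ hmem1
      have hdiff : (a + (1:ℝ) • u + s • v) - (a + t • u + s • v) = (1 - t) • u := by module
      rw [hdiff] at key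
      have hDf : Df (a + t • u + s • v) ((1 - t) • u)
          = (1 - t) * Df (a + t • u + s • v) u := (hlin _ hmem).map_smul _ _
      rw [hDf] at key
      have main := deriv_along' f (a + t • u + s • v) u (1 - t)
        (Df (a + t • u + s • v) u) (by linarith [ht.2]) key
      apply main.congr
      intro δ
      have he : a + (t + δ) • u + s • v = (a + t • u + s • v) + δ • u := by module
      rw [he]
    have hl : ∀ t ∈ Set.Ioc (0:ℝ) 1,
        Tendsto (fun δ : ℝ => (f (a + (t - δ) • u + s • v) - f (a + t • u + s • v)) / δ)
          (nhdsWithin 0 (Set.Ioi 0)) (nhds (-(Df (a + t • u + s • v) u))) := by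
      intro t ht
      have hmem : a + t • u + s • v ∈ A := hrect t ⟨ht.1.le, ht.2⟩ s hs
      have hmem0 : a + (0:ℝ) • u + s • v ∈ A := hrect 0 ⟨le_refl 0, zero_le_one⟩ s hs
      have key := hderiv _ hmem _ hmem0
      have hdiff : (a + (0:ℝ) • u + s • v) - (a + t • u + s • v) = t • (-u) := by module
      rw [hdiff] at key
      have hDf : Df (a + t • u + s • v) (t • (-u))
          = t * (-(Df (a + t • u + s • v) u)) := by
        rw [(hlin _ hmem).map_smul, (hlin _ hmem).map_neg]
        rfl
      rw [hDf] at key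
      have main := deriv_along' f (a + t • u + s • v) (-u) t
        (-(Df (a + t • u + s • v) u)) ht.1 key
      apply main.congr
      intro δ
      have he : a + (t - δ) • u + s • v = (a + t • u + s • v) + δ • (-u) := by module
      rw [he]
    have h01 := ftc_one_sided' (fun t => f (a + t • u + s • v))
      (fun t => Df (a + t • u + s • v) u) hr hl (hcont1 s hs)
    simpa using h01
  -- Step 2: FTC in the `v` direction, for each fixed `r`.
  have Eq2 : ∀ r ∈ Set.Icc (0:ℝ) 1,
      Df (a + r • u + v) u - Df (a + r • u) u
        = ∫ t in (0:ℝ)..1, D2f (a + r • u + t • v) v := by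
    intro r hrm
    have hr : ∀ t ∈ Set.Ico (0:ℝ) 1,
        Tendsto (fun δ : ℝ => (Df (a + r • u + (t + δ) • v) u - Df (a + r • u + t • v) u) / δ)
          (nhdsWithin 0 (Set.Ioi 0)) (nhds (D2f (a + r • u + t • v) v)) := by
      intro t ht
      have hmem : a + r • u + t • v ∈ A := hrect r hrm t ⟨ht.1, ht.2.le⟩
      have hmem1 : a + r • u + (1:ℝ) • v ∈ A := hrect r hrm 1 ⟨zero_le_one, le_refl 1⟩
      have key := hderiv2 _ hmem _ hmem1
      have hdiff : (a + r • u + (1:ℝ) • v) - (a + r • u + t • v) = (1 - t) • v := by module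
      rw [hdiff] at key
      have hDf : D2f (a + r • u + t • v) ((1 - t) • v)
          = (1 - t) * D2f (a + r • u + t • v) v := (hlin2 _ hmem).map_smul _ _
      rw [hDf] at key
      have main := deriv_along' (fun x => Df x u) (a + r • u + t • v) v (1 - t)
        (D2f (a + r • u + t • v) v) (by linarith [ht.2]) key
      apply main.congr
      intro δ
      have he : a + r • u + (t + δ) • v = (a + r • u + t • v) + δ • v := by module
      rw [he]
    have hl : ∀ t ∈ Set.Ioc (0:ℝ) 1,
        Tendsto (fun δ : ℝ => (Df (a + r • u + (t - δ) • v) u - Df (a + r • u + t • v) u) / δ)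
          (nhdsWithin 0 (Set.Ioi 0)) (nhds (-(D2f (a + r • u + t • v) v))) := by
      intro t ht
      have hmem : a + r • u + t • v ∈ A := hrect r hrm t ⟨ht.1.le, ht.2⟩
      have hmem0 : a + r • u + (0:ℝ) • v ∈ A := hrect r hrm 0 ⟨le_refl 0, zero_le_one⟩
      have key := hderiv2 _ hmem _ hmem0
      have hdiff : (a + r • u + (0:ℝ) • v) - (a + r • u + t • v) = t • (-v) := by module
      rw [hdiff] at key
      have hDf : D2f (a + r • u + t • v) (t • (-v))
          = t * (-(D2f (a + r • u + t • v) v)) := by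
        rw [(hlin2 _ hmem).map_smul, (hlin2 _ hmem).map_neg]
        rfl
      rw [hDf] at key
      have main := deriv_along' (fun x => Df x u) (a + r • u + t • v) (-v) t
        (-(D2f (a + r • u + t • v) v)) ht.1 key
      apply main.congr
      intro δ
      have he : a + r • u + (t - δ) • v = (a + r • u + t • v) + δ • (-v) := by module
      rw [he]
    have hcv : ContinuousOn (fun t : ℝ => D2f (a + r • u + t • v) v) (Set.Icc 0 1) := by
      have hmap : Set.MapsTo (fun t : ℝ => ((r : ℝ), t)) (Set.Icc 0 1)
          (Set.Icc 0 1 ×ˢ Set.Icc 0 1) := fun t ht => ⟨hrm, ht⟩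
      exact hcont2.comp ((continuous_const.prodMk continuous_id).continuousOn) hmap
    have h01 := ftc_one_sided' (fun t => Df (a + r • u + t • v) u)
      (fun t => D2f (a + r • u + t • v) v) hr hl hcv
    simpa using h01
  -- Assemble.
  have hX : IntervalIntegrable (fun r : ℝ => Df (a + r • u + v) u) MeasureTheory.volume 0 1 := by
    have h1 := hcont1 1 ⟨zero_le_one, le_refl 1⟩
    simp only [one_smul] at h1
    rw [← Set.uIcc_of_le (zero_le_one)] at h1
    exact h1.intervalIntegrable
  have hY : IntervalIntegrable (fun r : ℝ => Df (a + r • u) u) MeasureTheory.volume 0 1 := by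
    have h0 := hcont1 0 ⟨le_refl 0, zero_le_one⟩
    simp only [zero_smul, add_zero] at h0
    rw [← Set.uIcc_of_le (zero_le_one)] at h0
    exact h0.intervalIntegrable
  have e2 : (∫ r in (0:ℝ)..1, ∫ s in (0:ℝ)..1, D2f (a + r • u + s • v) v)
      = ∫ r in (0:ℝ)..1, (Df (a + r • u + v) u - Df (a + r • u) u) := by
    apply intervalIntegral.integral_congr
    intro r hr
    rw [Set.uIcc_of_le zero_le_one] at hr
    exact (Eq2 r hr).symm
  rw [e2, intervalIntegral.integral_sub hX hY]
  have e1a := Eq1 1 ⟨zero_le_one, le_refl 1⟩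
  have e1b := Eq1 0 ⟨le_refl 0, zero_le_one⟩
  simp only [one_smul, zero_smul, add_zero] at e1a e1b
  rw [← e1a, ← e1b]
  ring
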